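/- Let M : Fin u → Fin v → ℝ be a Monge matrix and let i be a natural number with i ≤ u. Then there exists a natural number s with s ≤ v such that: (1) every column j with j < s has a column minimum attained in some row r with i ≤ r < u; and (2) every column j with s ≤ j < v has a column minimum attained in some row r with r < i. In other words, the columns split into a prefix whose minima can be found among the bottom u − i rows and a suffix whose minima can be found among the top i rows. (The existence statement underlying Lemma 3 (l:split) of the paper.) -/
import Mathlib


/-- A rectangular Monge matrix. -/
def IsMonge {u v : ℕ} (M : Fin u → Fin v → ℝ) : Prop :=
  ∀ i1 i2 : Fin u, ∀ j1 j2 : Fin v, i1 ≤ i2 → j1 ≤ j2 →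
    M i2 j1 + M i1 j2 ≤ M i1 j1 + M i2 j2

/-- Row `r` attains the column minimum of column `c`. -/
def ColMinAt {u v : ℕ} (M : Fin u → Fin v → ℝ) (r : Fin u) (c : Fin v) : Prop :=
  ∀ i : Fin u, M r c ≤ M i c

lemma monge_prefix {u v : ℕ} (M : Fin u → Fin v → ℝ) (hM : IsMonge M)
    (j1 j2 : Fin v) (hj : j1 ≤ j2) (r1 r2 : Fin u) (hr : r1 ≤ r2)
    (h1 : ColMinAt M r1 j1) (h2 : ColMinAt M r2 j2) : ColMinAt M r2 j1 := by
  intro k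
  have hmo := hM r1 r2 j1 j2 hr hj
  have := h2 r1
  have h21 : M r2 j1 ≤ M r1 j1 := by linarith
  exact h21.trans (h1 k)

/-- The existence statement underlying Lemma 3 (l:split): for any row
threshold `i ≤ u` there is a column threshold `s ≤ v` such that every column
before `s` has a column minimum among the bottom rows (indices `≥ i`) and
every column from `s` on has a column minimum among the top rows
(indices `< i`). -/
theorem monge_split {u v : ℕ} (hu : 0 < u) (M : Fin u → Fin v → ℝ)
    (hM : IsMonge M) (i : ℕ) (hi : i ≤ u) :
    ∃ s : ℕ, s ≤ v ∧
      (∀ j : Fin v, (j : ℕ) < s → ∃ r : Fin u, i ≤ (r : ℕ) ∧ ColMinAt M r j) ∧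
      (∀ j : Fin v, s ≤ (j : ℕ) → ∃ r : Fin u, (r : ℕ) < i ∧ ColMinAt M r j) := by
  classical
  have hne : Nonempty (Fin u) := ⟨⟨0, hu⟩⟩
  have hmin : ∀ j : Fin v, ∃ r : Fin u, ColMinAt M r j := by
    intro j
    obtain ⟨r, hr⟩ := Finite.exists_min (fun r => M r j)
    exact ⟨r, hr⟩
  set Top : Fin v → Prop := fun j => ∃ r : Fin u, (r : ℕ) < i ∧ ColMinAt M r j
  set Bot : Fin v → Prop := fun j => ∃ r : Fin u, i ≤ (r : ℕ) ∧ ColMinAt M r j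
  have hTB : ∀ j : Fin v, Top j ∨ Bot j := by
    intro j
    obtain ⟨r, hr⟩ := hmin j
    rcases lt_or_ge (r : ℕ) i with h | h
    · exact Or.inl ⟨r, h, hr⟩
    · exact Or.inr ⟨r, h, hr⟩
  -- Bot is downward closed
  have hBdown : ∀ j1 j2 : Fin v, j1 ≤ j2 → Bot j2 → Bot j1 := by
    intro j1 j2 hj ⟨r2, hr2, h2⟩
    obtain ⟨r1, h1⟩ := hmin j1
    rcases le_or_gt r1 r2 with h | h
    · exact ⟨r2, hr2, monge_prefix M hM j1 j2 hj r1 r2 h h1 h2⟩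
    · refine ⟨r1, le_trans hr2 ?_, h1⟩
      exact le_of_lt (by exact_mod_cast h)
  set S : Set ℕ := {t | ∀ j : Fin v, t ≤ (j : ℕ) → Top j}
  have hvS : v ∈ S := fun j hj => absurd j.isLt (not_lt.mpr hj)
  have hSne : S.Nonempty := ⟨v, hvS⟩
  refine ⟨sInf S, csInf_le (OrderBot.bddBelow S) hvS, ?_, ?_⟩
  · intro j hj
    have hjS : (j : ℕ) ∉ S := fun h => absurd (csInf_le (OrderBot.bddBelow S) h) (not_le.mpr hj)
    simp only [S, Set.mem_setOf_eq] at hjS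
    push_neg at hjS
    obtain ⟨j', hjj', hj'⟩ := hjS
    have hb : Bot j' := (hTB j').resolve_left hj'
    exact hBdown j j' hjj' hb
  · intro j hj
    exact Nat.sInf_mem hSne j hj
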